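/- Let Σ be an alphabet and α ∈ ℕ⁺ a pattern in which every variable occurs at least twice. If there exists a 1-uniform morphism σ : ℕ* → Σ* such that every length-2 factor of σ(α) occurs exactly once in σ(α), then α is not a fixed point of a nontrivial morphism. -/

import Mathlib

private lemma sum_le_length (l : List ℕ) (h : ∀ a ∈ l, a ≤ 1) : l.sum ≤ l.length := by
  induction l with
  | nil => simp
  | cons a t ih =>
    simp only [List.sum_cons, List.length_cons]
    have := h a (by simp)
    have := ih (fun b hb => h b (by simp [hb]))
    omega

private lemma all_eq_one (l : List ℕ) (h : ∀ a ∈ l, a ≤ 1) (hs : l.sum = l.length) :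
    ∀ a ∈ l, a = 1 := by
  induction l with
  | nil => simp
  | cons a t ih =>
    have ha := h a (by simp)
    have ht : ∀ b ∈ t, b ≤ 1 := fun b hb => h b (by simp [hb])
    have h1 := sum_le_length t ht
    simp only [List.sum_cons, List.length_cons] at hs
    have ha1 : a = 1 := by omega
    intro b hb
    rcases List.mem_cons.mp hb with rfl | hb
    · exact ha1
    · exact ih ht (by omega) b hb

private lemma flatMap_eq_map {S : Type*} (g : ℕ → S) (φ : ℕ → List S) (l : List ℕ)
    (h : ∀ y ∈ l, φ y = [g y]) : l.flatMap φ = l.map g := by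
  induction l with
  | nil => simp
  | cons a t ih =>
    rw [List.flatMap_cons, h a (by simp), ih (fun y hy => h y (by simp [hy]))]
    simp

private lemma map_self_id {α : Type*} (g : α → α) (l : List α) (h : l.map g = l) :
    ∀ y ∈ l, g y = y := by
  induction l with
  | nil => simp
  | cons a t ih =>
    simp only [List.map_cons, List.cons.injEq] at h
    intro y hy
    rcases List.mem_cons.mp hy with rfl | hy
    · exact h.1
    · exact ih h.2 y hy

/-- Let α ∈ ℕ⁺ be a pattern in which every variable occurs at least twice.
If there exists a 1-uniform morphism σ : ℕ* → Σ* such that every length-2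
factor of σ(α) occurs exactly once in σ(α), then α is not a fixed point of
a nontrivial morphism. -/
theorem stmt_14 (S : Type*) (α : List ℕ) (hα : α ≠ [])
    (hcount : ∀ x ∈ α, 2 ≤ α.count x)
    (hex : ∃ σ : ℕ → List S, (∀ x, (σ x).length = 1) ∧
      ∀ p q : ℕ, p + 2 ≤ (α.flatMap σ).length →
        q + 2 ≤ (α.flatMap σ).length →
        ((α.flatMap σ).drop p).take 2 = ((α.flatMap σ).drop q).take 2 →
        p = q) :
    ¬ ∃ φ : ℕ → List ℕ, α.flatMap φ = α ∧ ∃ x ∈ α, φ x ≠ [x] := by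
  obtain ⟨σ, h1, h2⟩ := hex
  choose f hσ using fun x => List.length_eq_one_iff.mp (h1 x)
  have hβ : α.flatMap σ = α.map f :=
    flatMap_eq_map f σ α (fun y _ => hσ y)
  -- unique length-2 factors in α itself
  have huniq : ∀ p q, p + 2 ≤ α.length → q + 2 ≤ α.length →
      (α.drop p).take 2 = (α.drop q).take 2 → p = q := by
    intro p q hp hq h
    apply h2 p q (by simp [hβ, hp]) (by simp [hβ, hq])
    rw [hβ, ← List.map_drop, ← List.map_take, ← List.map_drop, ← List.map_take, h]
  rintro ⟨φ, hfix, x, hx, hne⟩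
  -- step 1: every variable in α has |φ y| ≤ 1
  have hle : ∀ y ∈ α, (φ y).length ≤ 1 := by
    intro y hy
    by_contra hgt
    push_neg at hgt
    -- two occurrences of y in α
    have hdup : List.Sublist [y, y] α := by
      rw [← List.duplicate_iff_sublist, List.duplicate_iff_two_le_count]
      exact hcount y hy
    rw [List.cons_sublist_iff] at hdup
    obtain ⟨r₁, r₂, hαr, hy1, hsub⟩ := hdup
    have hy2 : y ∈ r₂ := List.singleton_sublist.mp hsub
    obtain ⟨u₁, u₂, rfl⟩ := List.append_of_mem hy1
    obtain ⟨v₁, v₂, rfl⟩ := List.append_of_mem hy2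
    -- φ y = a :: b :: t
    obtain ⟨a, b, t, hφy⟩ : ∃ a b t, φ y = a :: b :: t := by
      rcases hφ : φ y with _ | ⟨a, _ | ⟨b, t⟩⟩
      · rw [hφ] at hgt; simp at hgt
      · rw [hφ] at hgt; simp at hgt
      · exact ⟨a, b, t, rfl⟩
    -- rewrite α
    have hα2 : α = (u₁.flatMap φ) ++ (a :: b :: t) ++
        ((u₂.flatMap φ) ++ (v₁.flatMap φ)) ++ (a :: b :: t) ++ (v₂.flatMap φ) := by
      conv_lhs => rw [← hfix, hαr]
      simp [List.flatMap_append, List.flatMap_cons, hφy, List.append_assoc]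
    set p := (u₁.flatMap φ).length with hp
    set q := p + (a :: b :: t).length + ((u₂.flatMap φ) ++ (v₁.flatMap φ)).length with hq
    have hlen : α.length = q + (a :: b :: t).length + (v₂.flatMap φ).length := by
      rw [hα2]; simp [hp, hq]; omega
    have hfac1 : (α.drop p).take 2 = [a, b] := by
      conv_lhs => rw [hα2]
      rw [List.append_assoc, List.append_assoc, List.append_assoc, List.drop_left]
      simp
    have hfac2 : (α.drop q).take 2 = [a, b] := by
      conv_lhs => rw [hα2]
      have : (u₁.flatMap φ) ++ (a :: b :: t) ++ ((u₂.flatMap φ) ++ (v₁.flatMap φ)) ++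
          (a :: b :: t) ++ (v₂.flatMap φ) =
          ((u₁.flatMap φ) ++ (a :: b :: t) ++ ((u₂.flatMap φ) ++ (v₁.flatMap φ))) ++
          ((a :: b :: t) ++ (v₂.flatMap φ)) := by simp [List.append_assoc]
      rw [this]
      have hql : ((u₁.flatMap φ) ++ (a :: b :: t) ++
          ((u₂.flatMap φ) ++ (v₁.flatMap φ))).length = q := by simp [hp, hq]; omega
      rw [← hql, List.drop_left]
      simp
    have hpq : p = q := by
      apply huniq p q _ _ (by rw [hfac1, hfac2]) <;> simp at hlen ⊢ <;> omega
    simp only [hq, List.length_cons] at hpq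
    omega
  -- step 2: every variable in α has |φ y| = 1
  have hsum : (α.map (fun y => (φ y).length)).sum = α.length := by
    conv_rhs => rw [← hfix]
    rw [List.length_flatMap]
  have hone : ∀ y ∈ α, (φ y).length = 1 := by
    intro y hy
    have := all_eq_one (α.map (fun y => (φ y).length))
      (by intro a ha; simp only [List.mem_map] at ha; obtain ⟨z, hz, rfl⟩ := ha; exact hle z hz)
      (by rw [hsum]; simp)
    exact this _ (List.mem_map_of_mem hy)
  -- step 3: φ y = [y] for all y ∈ α
  have hsing : ∀ y ∈ α, φ y = [(φ y).head!] := by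
    intro y hy
    rcases List.length_eq_one_iff.mp (hone y hy) with ⟨a, ha⟩
    simp [ha]
  have hmap : α.map (fun y => (φ y).head!) = α := by
    rw [← flatMap_eq_map _ φ α hsing, hfix]
  have hid := map_self_id (fun y => (φ y).head!) α hmap x hx
  exact hne (by rw [hsing x hx, hid])
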